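/- arXiv:1308.1122 — 5 statements merged into one kernel-verified Lean document; each statement's English description precedes it below -/
import Mathlib

section
/- For any complex n×n matrix A, the trace of exp(A)·exp(A*) is less than or equal to the trace of exp(A + A*). -/
open Matrix
open ComplexOrder

namespace BernsteinAux

variable {n : ℕ}

local notation "𝕄" => Matrix (Fin n) (Fin n) ℂ

/-- The matrix viewed as a vector in Euclidean space (for the Frobenius inner product). -/
noncomputable def ev (X : 𝕄) : EuclideanSpace ℂ (Fin n × Fin n) :=
  (EuclideanSpace.equiv (Fin n × Fin n) ℂ).symm (fun p => X p.1 p.2)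

/-- Frobenius norm. -/
noncomputable def gn (X : 𝕄) : ℝ := ‖ev X‖

lemma inner_ev (X Y : 𝕄) : (inner ℂ (ev X) (ev Y) : ℂ) = (Xᴴ * Y).trace := by
  simp only [ev, PiLp.inner_apply, RCLike.inner_apply, Matrix.trace, Matrix.diag,
    Matrix.mul_apply, Matrix.conjTranspose_apply]
  rw [Fintype.sum_prod_type]
  rw [Finset.sum_comm]
  simp [Finset.mul_sum, EuclideanSpace.equiv, mul_comm]

lemma gn_nonneg (X : 𝕄) : 0 ≤ gn X := norm_nonneg _

lemma trace_conjTranspose_mul_self_eq (M : 𝕄) :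
    (Mᴴ * M).trace = ((gn M ^ 2 : ℝ) : ℂ) := by
  rw [← inner_ev, inner_self_eq_norm_sq_to_K]
  push_cast
  rfl

lemma gn_sq (M : 𝕄) : gn M ^ 2 = ((Mᴴ * M).trace).re := by
  rw [trace_conjTranspose_mul_self_eq, Complex.ofReal_re]

lemma cs (X Y : 𝕄) : ‖(Xᴴ * Y).trace‖ ≤ gn X * gn Y := by
  rw [← inner_ev]; exact norm_inner_le_norm _ _

lemma gn_conjTranspose (X : 𝕄) : gn Xᴴ = gn X := by
  have h : gn Xᴴ ^ 2 = gn X ^ 2 := by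
    rw [gn_sq, gn_sq, conjTranspose_conjTranspose, trace_mul_comm]
  rw [← Real.sqrt_sq (gn_nonneg Xᴴ), ← Real.sqrt_sq (gn_nonneg X), h]

lemma trace_cycle (P Q : 𝕄) (m : ℕ) : ((P * Q) ^ m).trace = ((Q * P) ^ m).trace := by
  cases m with
  | zero => simp
  | succ j =>
    have h : ∀ (P Q : 𝕄) (j : ℕ), (P * Q) ^ (j + 1) = P * ((Q * P) ^ j * Q) := by
      intro P Q j
      induction j with
      | zero => simp [pow_succ]
      | succ i ih => rw [pow_succ, ih, pow_succ]; noncomm_ring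
    rw [h, trace_mul_comm, mul_assoc, ← pow_succ]


lemma re_le_norm (z : ℂ) : z.re ≤ ‖z‖ := by
  exact Complex.re_le_norm z

lemma gn_herm_pow (K : 𝕄) (m : ℕ) :
    gn ((K * Kᴴ) ^ m) * gn ((Kᴴ * K) ^ m) = ((K * Kᴴ) ^ (2 * m)).trace.re := by
  have hh : ((K * Kᴴ) ^ m)ᴴ = (K * Kᴴ) ^ m := by
    rw [conjTranspose_pow, conjTranspose_mul, conjTranspose_conjTranspose]
  have hh' : ((Kᴴ * K) ^ m)ᴴ = (Kᴴ * K) ^ m := by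
    rw [conjTranspose_pow, conjTranspose_mul, conjTranspose_conjTranspose]
  have h1 : gn ((K * Kᴴ) ^ m) ^ 2 = ((K * Kᴴ) ^ (2 * m)).trace.re := by
    rw [gn_sq, hh, ← pow_add, two_mul]
  have h2 : gn ((Kᴴ * K) ^ m) ^ 2 = ((K * Kᴴ) ^ (2 * m)).trace.re := by
    rw [gn_sq, hh', ← pow_add, ← two_mul, trace_cycle]
  have h3 : gn ((K * Kᴴ) ^ m) = gn ((Kᴴ * K) ^ m) := by
    rw [← Real.sqrt_sq (gn_nonneg _), ← Real.sqrt_sq (gn_nonneg ((Kᴴ * K) ^ m)), h1, h2]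
  rw [← h3, ← pow_two, h1]

lemma key (k : ℕ) :
    (∀ P C : 𝕄, Pᴴ = P → Cᴴ = C →
      ‖((P * C) ^ (2 ^ k)).trace‖ ≤ gn (P ^ (2 ^ k)) * gn (C ^ (2 ^ k)))
    ∧ (∀ K : 𝕄, ‖(K ^ (2 ^ (k + 1))).trace‖ ≤ ((K * Kᴴ) ^ (2 ^ k)).trace.re) := by
  induction k with
  | zero =>
    constructor
    · intro P C hP hC
      simp only [pow_zero, pow_one]
      have h := cs P C
      rw [hP] at h
      exact h
    · intro K
      have h := cs Kᴴ K
      rw [conjTranspose_conjTranspose] at h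
      have h2 : gn Kᴴ * gn K = ((K * Kᴴ) ^ (2 ^ 0)).trace.re := by
        rw [pow_zero, pow_one, gn_conjTranspose, ← pow_two, gn_sq, trace_mul_comm]
      calc ‖(K ^ (2 ^ (0 + 1))).trace‖ = ‖(K * K).trace‖ := by
            norm_num [pow_two]
        _ ≤ gn Kᴴ * gn K := h
        _ = _ := h2
  | succ k ih =>
    obtain ⟨hLT, hV⟩ := ih
    have step : ∀ K : 𝕄, ((K ^ 2 * (K ^ 2)ᴴ) ^ (2 ^ k)).trace.re
        ≤ ((K * Kᴴ) ^ (2 ^ (k + 1))).trace.re := by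
      intro K
      have e1 : K ^ 2 * (K ^ 2)ᴴ = K * (K * (Kᴴ * Kᴴ)) := by
        rw [conjTranspose_pow]; noncomm_ring
      have e2 : (K * (Kᴴ * Kᴴ)) * K = (K * Kᴴ) * (Kᴴ * K) := by noncomm_ring
      calc ((K ^ 2 * (K ^ 2)ᴴ) ^ (2 ^ k)).trace.re
          ≤ ‖((K ^ 2 * (K ^ 2)ᴴ) ^ (2 ^ k)).trace‖ := re_le_norm _
        _ = ‖(((K * Kᴴ) * (Kᴴ * K)) ^ (2 ^ k)).trace‖ := by
            rw [e1, trace_cycle, e2]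
        _ ≤ gn ((K * Kᴴ) ^ (2 ^ k)) * gn ((Kᴴ * K) ^ (2 ^ k)) :=
            hLT _ _ (by rw [conjTranspose_mul, conjTranspose_conjTranspose])
                    (by rw [conjTranspose_mul, conjTranspose_conjTranspose])
        _ = ((K * Kᴴ) ^ (2 * 2 ^ k)).trace.re := gn_herm_pow K _
        _ = ((K * Kᴴ) ^ (2 ^ (k + 1))).trace.re := by rw [← pow_succ']
    constructor
    · intro P C hP hC
      have hP2 : (P ^ 2)ᴴ = P ^ 2 := by rw [conjTranspose_pow, hP]
      have hC2 : (C ^ 2)ᴴ = C ^ 2 := by rw [conjTranspose_pow, hC]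
      have e3 : (P * C) * (P * C)ᴴ = P * (C * (C * P)) := by
        rw [conjTranspose_mul, hP, hC]; noncomm_ring
      have e4 : (C * (C * P)) * P = C ^ 2 * P ^ 2 := by noncomm_ring
      calc ‖((P * C) ^ (2 ^ (k + 1))).trace‖
          ≤ (((P * C) * (P * C)ᴴ) ^ (2 ^ k)).trace.re := hV (P * C)
        _ ≤ ‖(((P * C) * (P * C)ᴴ) ^ (2 ^ k)).trace‖ := re_le_norm _
        _ = ‖((C ^ 2 * P ^ 2) ^ (2 ^ k)).trace‖ := by rw [e3, trace_cycle, e4]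
        _ ≤ gn ((C ^ 2) ^ (2 ^ k)) * gn ((P ^ 2) ^ (2 ^ k)) := hLT _ _ hC2 hP2
        _ = gn (P ^ (2 ^ (k + 1))) * gn (C ^ (2 ^ (k + 1))) := by
            simp only [← pow_mul, ← pow_succ']
            rw [mul_comm]
    · intro K
      have e5 : K ^ (2 ^ (k + 1 + 1)) = (K ^ 2) ^ (2 ^ (k + 1)) := by
        rw [← pow_mul, ← pow_succ']
      calc ‖(K ^ (2 ^ (k + 1 + 1))).trace‖
          = ‖((K ^ 2) ^ (2 ^ (k + 1))).trace‖ := by rw [e5]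
        _ ≤ ((K ^ 2 * (K ^ 2)ᴴ) ^ (2 ^ k)).trace.re := hV (K ^ 2)
        _ ≤ ((K * Kᴴ) ^ (2 ^ (k + 1))).trace.re := step K

lemma main_alg (k : ℕ) (B : 𝕄) :
    (B ^ (2 ^ k) * (Bᴴ) ^ (2 ^ k)).trace.re ≤ ((B * Bᴴ) ^ (2 ^ k)).trace.re := by
  induction k generalizing B with
  | zero => simp
  | succ k ih =>
    obtain ⟨hLT, hV⟩ := key (n := n) k
    have step : ((B ^ 2 * (B ^ 2)ᴴ) ^ (2 ^ k)).trace.re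
        ≤ ((B * Bᴴ) ^ (2 ^ (k + 1))).trace.re := by
      have e1 : B ^ 2 * (B ^ 2)ᴴ = B * (B * (Bᴴ * Bᴴ)) := by
        rw [conjTranspose_pow]; noncomm_ring
      have e2 : (B * (Bᴴ * Bᴴ)) * B = (B * Bᴴ) * (Bᴴ * B) := by noncomm_ring
      calc ((B ^ 2 * (B ^ 2)ᴴ) ^ (2 ^ k)).trace.re
          ≤ ‖((B ^ 2 * (B ^ 2)ᴴ) ^ (2 ^ k)).trace‖ := re_le_norm _
        _ = ‖(((B * Bᴴ) * (Bᴴ * B)) ^ (2 ^ k)).trace‖ := by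
            rw [e1, trace_cycle, e2]
        _ ≤ gn ((B * Bᴴ) ^ (2 ^ k)) * gn ((Bᴴ * B) ^ (2 ^ k)) :=
            hLT _ _ (by rw [conjTranspose_mul, conjTranspose_conjTranspose])
                    (by rw [conjTranspose_mul, conjTranspose_conjTranspose])
        _ = ((B * Bᴴ) ^ (2 * 2 ^ k)).trace.re := gn_herm_pow B _
        _ = ((B * Bᴴ) ^ (2 ^ (k + 1))).trace.re := by rw [← pow_succ']
    have e6 : B ^ (2 ^ (k + 1)) = (B ^ 2) ^ (2 ^ k) := by
      rw [← pow_mul, ← pow_succ']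
    have e7 : (Bᴴ) ^ (2 ^ (k + 1)) = ((B ^ 2)ᴴ) ^ (2 ^ k) := by
      rw [conjTranspose_pow, ← pow_mul, ← pow_succ']
    calc (B ^ (2 ^ (k + 1)) * (Bᴴ) ^ (2 ^ (k + 1))).trace.re
        = ((B ^ 2) ^ (2 ^ k) * ((B ^ 2)ᴴ) ^ (2 ^ k)).trace.re := by rw [e6, e7]
      _ ≤ ((B ^ 2 * (B ^ 2)ᴴ) ^ (2 ^ k)).trace.re := ih (B ^ 2)
      _ ≤ ((B * Bᴴ) ^ (2 ^ (k + 1))).trace.re := step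


lemma trace_self_mul_conjTranspose (M : 𝕄) :
    (M * Mᴴ).trace = ((gn M ^ 2 : ℝ) : ℂ) := by
  rw [trace_mul_comm, trace_conjTranspose_mul_self_eq]

section Generic

open NormedSpace Nat

variable {𝔸 : Type*} [NormedRing 𝔸] [NormedAlgebra ℂ 𝔸] [CompleteSpace 𝔸] [NormOneClass 𝔸]

lemma norm_exp_le (x : 𝔸) : ‖exp x‖ ≤ Real.exp ‖x‖ := by
  rw [exp_eq_tsum ℂ]
  refine tsum_of_norm_bounded (Real.exp_eq_exp_ℝ ▸ expSeries_div_hasSum_exp ‖x‖) ?_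
  intro i
  rw [norm_smul]
  have h1 : ‖((i ! : ℕ)⁻¹ : ℂ)‖ = ((i ! : ℝ))⁻¹ := by
    rw [norm_inv]
    norm_num
  rw [h1, div_eq_inv_mul]
  exact mul_le_mul_of_nonneg_left (norm_pow_le x i) (by positivity)

lemma norm_exp_sub_one_sub_le (x : 𝔸) :
    ‖exp x - 1 - x‖ ≤ ‖x‖ ^ 2 * Real.exp ‖x‖ := by
  have hs : HasSum (fun i : ℕ => ((i ! : ℕ)⁻¹ : ℂ) • x ^ i) (exp x) :=
    exp_series_hasSum_exp' x
  have h2 : HasSum (fun i : ℕ => (((i + 2)! : ℕ)⁻¹ : ℂ) • x ^ (i + 2))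
      (exp x - ∑ j ∈ Finset.range 2, ((j ! : ℕ)⁻¹ : ℂ) • x ^ j) :=
    (hasSum_nat_add_iff' 2).mpr hs
  have h3 : (∑ j ∈ Finset.range 2, ((j ! : ℕ)⁻¹ : ℂ) • x ^ j) = 1 + x := by
    simp [Finset.sum_range_succ]
  rw [h3] at h2
  rw [sub_sub, ← h2.tsum_eq]
  have hg : HasSum (fun i : ℕ => ‖x‖ ^ 2 * (‖x‖ ^ i / i !)) (‖x‖ ^ 2 * Real.exp ‖x‖) :=
    (Real.exp_eq_exp_ℝ ▸ expSeries_div_hasSum_exp ‖x‖).mul_left _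
  refine tsum_of_norm_bounded hg ?_
  intro i
  rw [norm_smul]
  have h1 : ‖(((i + 2)! : ℕ)⁻¹ : ℂ)‖ = (((i + 2)! : ℝ))⁻¹ := by
    rw [norm_inv]; norm_num
  rw [h1]
  calc (((i + 2)! : ℝ))⁻¹ * ‖x ^ (i + 2)‖ ≤ ((i ! : ℝ))⁻¹ * (‖x‖ ^ 2 * ‖x‖ ^ i) := by
        refine mul_le_mul ?_ ?_ (norm_nonneg _) (by positivity)
        · refine inv_anti₀ (by positivity) ?_
          exact_mod_cast Nat.factorial_le (by omega)
        · calc ‖x ^ (i + 2)‖ ≤ ‖x‖ ^ (i + 2) := norm_pow_le x _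
            _ = ‖x‖ ^ 2 * ‖x‖ ^ i := by ring
    _ = ‖x‖ ^ 2 * (‖x‖ ^ i / i !) := by ring

lemma norm_pow_sub_pow (a b : 𝔸) (K : ℝ) (hK : 1 ≤ K) (ha : ‖a‖ ≤ K) (hb : ‖b‖ ≤ K)
    (m : ℕ) : ‖a ^ m - b ^ m‖ ≤ m * K ^ m * ‖a - b‖ := by
  induction m with
  | zero => simp
  | succ m ih =>
    have key : a ^ (m + 1) - b ^ (m + 1) = a ^ m * (a - b) + (a ^ m - b ^ m) * b := by
      noncomm_ring
    have hK0 : (0 : ℝ) ≤ K := le_trans zero_le_one hK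
    have h1 : ‖a ^ m * (a - b)‖ ≤ K ^ m * ‖a - b‖ := by
      calc ‖a ^ m * (a - b)‖ ≤ ‖a ^ m‖ * ‖a - b‖ := norm_mul_le _ _
        _ ≤ K ^ m * ‖a - b‖ := by
            gcongr
            exact (norm_pow_le a m).trans (pow_le_pow_left₀ (norm_nonneg a) ha m)
    have h2 : ‖(a ^ m - b ^ m) * b‖ ≤ (m * K ^ m * ‖a - b‖) * K := by
      calc ‖(a ^ m - b ^ m) * b‖ ≤ ‖a ^ m - b ^ m‖ * ‖b‖ := norm_mul_le _ _
        _ ≤ (m * K ^ m * ‖a - b‖) * K := by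
            apply mul_le_mul ih hb (norm_nonneg b)
            positivity
    calc ‖a ^ (m + 1) - b ^ (m + 1)‖ ≤ ‖a ^ m * (a - b)‖ + ‖(a ^ m - b ^ m) * b‖ := by
          rw [key]; exact norm_add_le _ _
      _ ≤ K ^ m * ‖a - b‖ + (m * K ^ m * ‖a - b‖) * K := add_le_add h1 h2
      _ ≤ ((m + 1 : ℕ) : ℝ) * K ^ (m + 1) * ‖a - b‖ := by
          rw [pow_succ]
          push_cast
          nlinarith [mul_nonneg (mul_nonneg (pow_nonneg hK0 m) (norm_nonneg (a - b)))
            (sub_nonneg.mpr hK)]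

lemma trotter_bound (X Y : 𝔸) (m : ℕ) (hm : 1 ≤ m) :
    ‖(exp ((m : ℂ)⁻¹ • X) * exp ((m : ℂ)⁻¹ • Y)) ^ m - exp (X + Y)‖ ≤
      Real.exp (‖X‖ + ‖Y‖) *
        (((‖X‖ + ‖Y‖) ^ 2 + 2 * (‖X‖ + ‖Y‖) * ((‖X‖ + ‖Y‖) ^ 2 * Real.exp (‖X‖ + ‖Y‖))
          + ((‖X‖ + ‖Y‖) ^ 2 * Real.exp (‖X‖ + ‖Y‖)) ^ 2
          + 3 * ((‖X‖ + ‖Y‖) ^ 2 * Real.exp (‖X‖ + ‖Y‖))) / m) := by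
  have hm0 : (m : ℝ) ≠ 0 := by positivity
  have hm1 : (1 : ℝ) ≤ (m : ℝ) := by exact_mod_cast hm
  have hmpos : (0 : ℝ) < (m : ℝ) := by positivity
  set r : ℝ := ‖X‖ + ‖Y‖ with hr
  have hr0 : 0 ≤ r := by positivity
  set β : ℝ := r ^ 2 * Real.exp r with hβ
  have hβ0 : 0 ≤ β := by positivity
  set u : 𝔸 := (m : ℂ)⁻¹ • X with hu_def
  set v : 𝔸 := (m : ℂ)⁻¹ • Y with hv_def
  set w : 𝔸 := (m : ℂ)⁻¹ • (X + Y) with hw_def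
  have hnu : ‖u‖ = ‖X‖ / m := by
    rw [hu_def, norm_smul, norm_inv, Complex.norm_natCast, div_eq_inv_mul]
  have hnv : ‖v‖ = ‖Y‖ / m := by
    rw [hv_def, norm_smul, norm_inv, Complex.norm_natCast, div_eq_inv_mul]
  have hnw : ‖w‖ ≤ r / m := by
    have hnw' : ‖w‖ = ‖X + Y‖ / m := by
      rw [hw_def, norm_smul, norm_inv, Complex.norm_natCast, div_eq_inv_mul]
    rw [hnw']
    gcongr
    exact norm_add_le _ _
  have hur : ‖u‖ ≤ r / m := by rw [hnu]; gcongr; · linarith [norm_nonneg Y]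
  have hvr : ‖v‖ ≤ r / m := by rw [hnv]; gcongr; · linarith [norm_nonneg X]
  have hrm_le : r / m ≤ r := by
    rw [div_le_iff₀ hmpos]; nlinarith
  -- remainder bounds
  have hEbound : ∀ z : 𝔸, ‖z‖ ≤ r / m → ‖exp z - 1 - z‖ ≤ β / m ^ 2 := by
    intro z hz
    calc ‖exp z - 1 - z‖ ≤ ‖z‖ ^ 2 * Real.exp ‖z‖ := norm_exp_sub_one_sub_le z
      _ ≤ (r / m) ^ 2 * Real.exp r := by
          gcongr
          exact hz.trans hrm_le
      _ = β / m ^ 2 := by rw [hβ]; field_simp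
  set Eu : 𝔸 := exp u - 1 - u with hEu_def
  set Ev : 𝔸 := exp v - 1 - v with hEv_def
  set Ew : 𝔸 := exp w - 1 - w with hEw_def
  have hexpu : exp u = 1 + u + Eu := by rw [hEu_def]; abel
  have hexpv : exp v = 1 + v + Ev := by rw [hEv_def]; abel
  have hexpw : exp w = 1 + w + Ew := by rw [hEw_def]; abel
  have hEu2 : ‖Eu‖ ≤ β / m ^ 2 := hEbound u hur
  have hEv2 : ‖Ev‖ ≤ β / m ^ 2 := hEbound v hvr
  have hEw2 : ‖Ew‖ ≤ β / m ^ 2 := hEbound w hnw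
  have hm2 : (1 : ℝ) ≤ (m : ℝ) ^ 2 := by nlinarith
  have hEuβ : ‖Eu‖ ≤ β := hEu2.trans (div_le_self hβ0 hm2)
  have hEvβ : ‖Ev‖ ≤ β := hEv2.trans (div_le_self hβ0 hm2)
  have huP : ‖u‖ ≤ r := hur.trans hrm_le
  have hvP : ‖v‖ ≤ r := hvr.trans hrm_le
  have hw_uv : w = u + v := by rw [hw_def, hu_def, hv_def, smul_add]
  have hPQ : exp u * exp v - exp w
      = u * v + u * Ev + Eu * v + Eu * Ev + Eu + Ev - Ew := by
    rw [hexpu, hexpv, hexpw, hw_uv]; noncomm_ring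
  have t1 : ‖u * v‖ ≤ r ^ 2 / m ^ 2 := by
    calc ‖u * v‖ ≤ ‖u‖ * ‖v‖ := norm_mul_le _ _
      _ ≤ (r / m) * (r / m) := mul_le_mul hur hvr (norm_nonneg _) (by positivity)
      _ = r ^ 2 / m ^ 2 := by ring
  have t2 : ‖u * Ev‖ ≤ r * (β / m ^ 2) := by
    calc ‖u * Ev‖ ≤ ‖u‖ * ‖Ev‖ := norm_mul_le _ _
      _ ≤ r * (β / m ^ 2) := mul_le_mul huP hEv2 (norm_nonneg _) hr0
  have t3 : ‖Eu * v‖ ≤ (β / m ^ 2) * r := by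
    calc ‖Eu * v‖ ≤ ‖Eu‖ * ‖v‖ := norm_mul_le _ _
      _ ≤ (β / m ^ 2) * r := mul_le_mul hEu2 hvP (norm_nonneg _) (by positivity)
  have t4 : ‖Eu * Ev‖ ≤ β * (β / m ^ 2) := by
    calc ‖Eu * Ev‖ ≤ ‖Eu‖ * ‖Ev‖ := norm_mul_le _ _
      _ ≤ β * (β / m ^ 2) := mul_le_mul hEuβ hEv2 (norm_nonneg _) hβ0
  have hX1 : ‖u * v + u * Ev‖ ≤ r ^ 2 / m ^ 2 + r * (β / m ^ 2) :=
    (norm_add_le _ _).trans (add_le_add t1 t2)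
  have hX2 : ‖u * v + u * Ev + Eu * v‖ ≤ r ^ 2 / m ^ 2 + r * (β / m ^ 2) + (β / m ^ 2) * r :=
    (norm_add_le _ _).trans (add_le_add hX1 t3)
  have hX3 : ‖u * v + u * Ev + Eu * v + Eu * Ev‖ ≤
      r ^ 2 / m ^ 2 + r * (β / m ^ 2) + (β / m ^ 2) * r + β * (β / m ^ 2) :=
    (norm_add_le _ _).trans (add_le_add hX2 t4)
  have hX4 : ‖u * v + u * Ev + Eu * v + Eu * Ev + Eu‖ ≤
      r ^ 2 / m ^ 2 + r * (β / m ^ 2) + (β / m ^ 2) * r + β * (β / m ^ 2) + β / m ^ 2 :=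
    (norm_add_le _ _).trans (add_le_add hX3 hEu2)
  have hX5 : ‖u * v + u * Ev + Eu * v + Eu * Ev + Eu + Ev‖ ≤
      r ^ 2 / m ^ 2 + r * (β / m ^ 2) + (β / m ^ 2) * r + β * (β / m ^ 2) + β / m ^ 2
        + β / m ^ 2 :=
    (norm_add_le _ _).trans (add_le_add hX4 hEv2)
  have hD : ‖exp u * exp v - exp w‖ ≤ (r ^ 2 + 2 * r * β + β ^ 2 + 3 * β) / m ^ 2 := by
    rw [hPQ]
    calc ‖u * v + u * Ev + Eu * v + Eu * Ev + Eu + Ev - Ew‖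
        ≤ ‖u * v + u * Ev + Eu * v + Eu * Ev + Eu + Ev‖ + ‖Ew‖ := norm_sub_le _ _
      _ ≤ r ^ 2 / m ^ 2 + r * (β / m ^ 2) + (β / m ^ 2) * r + β * (β / m ^ 2) + β / m ^ 2
            + β / m ^ 2 + β / m ^ 2 := add_le_add hX5 hEw2
      _ = (r ^ 2 + 2 * r * β + β ^ 2 + 3 * β) / m ^ 2 := by ring
  have hQm : (exp w) ^ m = exp (X + Y) := by
    letI : NormedAlgebra ℚ 𝔸 := NormedAlgebra.restrictScalars ℚ ℂ 𝔸
    rw [← NormedSpace.exp_nsmul]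
    congr 1
    rw [hw_def, ← Nat.cast_smul_eq_nsmul ℂ, smul_smul, mul_inv_cancel₀, one_smul]
    exact_mod_cast hm0
  have hP : ‖exp u * exp v‖ ≤ Real.exp (r / m) := by
    calc ‖exp u * exp v‖ ≤ ‖exp u‖ * ‖exp v‖ := norm_mul_le _ _
      _ ≤ Real.exp ‖u‖ * Real.exp ‖v‖ :=
          mul_le_mul (norm_exp_le u) (norm_exp_le v) (norm_nonneg _) (Real.exp_pos _).le
      _ = Real.exp (r / m) := by rw [← Real.exp_add, hnu, hnv, ← add_div]
  have hQ : ‖exp w‖ ≤ Real.exp (r / m) := (norm_exp_le w).trans (Real.exp_le_exp.mpr hnw)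
  have hK1 : 1 ≤ Real.exp (r / m) := Real.one_le_exp (by positivity)
  have hKm : (Real.exp (r / m)) ^ m = Real.exp r := by
    rw [← Real.exp_nat_mul]
    congr 1
    field_simp
  calc ‖(exp u * exp v) ^ m - exp (X + Y)‖
      = ‖(exp u * exp v) ^ m - (exp w) ^ m‖ := by rw [hQm]
    _ ≤ m * (Real.exp (r / m)) ^ m * ‖exp u * exp v - exp w‖ :=
        norm_pow_sub_pow _ _ _ hK1 hP hQ m
    _ = m * Real.exp r * ‖exp u * exp v - exp w‖ := by rw [hKm]
    _ ≤ m * Real.exp r * ((r ^ 2 + 2 * r * β + β ^ 2 + 3 * β) / m ^ 2) := by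
        gcongr
    _ = Real.exp r * ((r ^ 2 + 2 * r * β + β ^ 2 + 3 * β) / m) := by
        field_simp

end Generic

section MatrixLimit

open NormedSpace Filter

attribute [local instance] Matrix.linftyOpNormedRing Matrix.linftyOpNormedAlgebra

variable [Nonempty (Fin n)]

lemma norm_trace_le (M : 𝕄) : ‖M.trace‖ ≤ n * ‖M‖ := by
  have hentry : ∀ i : Fin n, ‖M i i‖ ≤ ‖M‖ := by
    intro i
    have h1 : ‖M i i‖₊ ≤ ∑ j, ‖M i j‖₊ :=
      Finset.single_le_sum (f := fun j => ‖M i j‖₊) (fun j _ => zero_le) (Finset.mem_univ i)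
    have h2 : (∑ j, ‖M i j‖₊) ≤ ‖M‖₊ := by
      rw [Matrix.linfty_opNNNorm_def]
      exact Finset.le_sup (f := fun i => ∑ j, ‖M i j‖₊) (Finset.mem_univ i)
    exact_mod_cast h1.trans h2
  calc ‖M.trace‖ ≤ ∑ i, ‖M i i‖ := norm_sum_le _ _
    _ ≤ ∑ _i : Fin n, ‖M‖ := Finset.sum_le_sum (fun i _ => hentry i)
    _ = n * ‖M‖ := by simp [Finset.sum_const, Finset.card_univ, nsmul_eq_mul]

lemma re_ineq (A : 𝕄) :
    ((exp A * exp Aᴴ).trace).re ≤ ((exp (A + Aᴴ)).trace).re := by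
  have key1 : ∀ k : ℕ, ((exp A * exp Aᴴ).trace).re ≤
      (((exp (((2 ^ k : ℕ) : ℂ)⁻¹ • A) * exp (((2 ^ k : ℕ) : ℂ)⁻¹ • Aᴴ)) ^ (2 ^ k)).trace).re := by
    intro k
    have hne : ((2 ^ k : ℕ) : ℂ) ≠ 0 :=
      Nat.cast_ne_zero.mpr (pow_pos (by norm_num : (0:ℕ) < 2) k).ne'
    set B : 𝕄 := exp (((2 ^ k : ℕ) : ℂ)⁻¹ • A) with hB
    have hBH : Bᴴ = exp (((2 ^ k : ℕ) : ℂ)⁻¹ • Aᴴ) := by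
      rw [hB, ← Matrix.exp_conjTranspose, conjTranspose_smul]
      congr 2
      simp
    have hBk : B ^ (2 ^ k) = exp A := by
      rw [hB, ← Matrix.exp_nsmul, ← Nat.cast_smul_eq_nsmul ℂ, smul_smul,
        mul_inv_cancel₀ hne, one_smul]
    have hBHk : (Bᴴ) ^ (2 ^ k) = exp Aᴴ := by
      rw [← Matrix.conjTranspose_pow, hBk, ← Matrix.exp_conjTranspose]
    calc ((exp A * exp Aᴴ).trace).re
        = ((B ^ (2 ^ k) * (Bᴴ) ^ (2 ^ k)).trace).re := by rw [hBk, hBHk]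
      _ ≤ (((B * Bᴴ) ^ (2 ^ k)).trace).re := main_alg k B
      _ = _ := by rw [hBH]
  have key2 : Tendsto (fun k : ℕ =>
      (((exp (((2 ^ k : ℕ) : ℂ)⁻¹ • A) * exp (((2 ^ k : ℕ) : ℂ)⁻¹ • Aᴴ)) ^ (2 ^ k)).trace).re)
      atTop (nhds (((exp (A + Aᴴ)).trace).re)) := by
    rw [tendsto_iff_dist_tendsto_zero]
    set r : ℝ := ‖A‖ + ‖Aᴴ‖ with hr
    set D : ℝ := r ^ 2 + 2 * r * (r ^ 2 * Real.exp r) + (r ^ 2 * Real.exp r) ^ 2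
      + 3 * (r ^ 2 * Real.exp r) with hD
    refine squeeze_zero (g := fun k => (n * (Real.exp r * D)) * (1 / 2 : ℝ) ^ k)
      (fun k => dist_nonneg) (fun k => ?_) ?_
    · show dist _ _ ≤ (n * (Real.exp r * D)) * (1 / 2 : ℝ) ^ k
      have htb := trotter_bound A Aᴴ (2 ^ k) Nat.one_le_two_pow
      set M : 𝕄 := (exp (((2 ^ k : ℕ) : ℂ)⁻¹ • A) * exp (((2 ^ k : ℕ) : ℂ)⁻¹ • Aᴴ)) ^ (2 ^ k)
        with hM
      calc dist ((M.trace).re) (((exp (A + Aᴴ)).trace).re)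
          = |((M.trace) - ((exp (A + Aᴴ)).trace)).re| := by
            rw [Real.dist_eq, Complex.sub_re]
        _ ≤ ‖(M.trace) - ((exp (A + Aᴴ)).trace)‖ := by
            exact Complex.abs_re_le_norm _
        _ = ‖(M - exp (A + Aᴴ)).trace‖ := by rw [Matrix.trace_sub]
        _ ≤ n * ‖M - exp (A + Aᴴ)‖ := norm_trace_le _
        _ ≤ n * (Real.exp r * (D / (2 ^ k : ℕ))) := by
            gcongr
            exact htb
        _ = (n * (Real.exp r * D)) * (1 / 2 : ℝ) ^ k := by
            push_cast
            rw [div_pow, one_pow]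
            ring
    · have h0 : Tendsto (fun k : ℕ => (1 / 2 : ℝ) ^ k) atTop (nhds 0) :=
        tendsto_pow_atTop_nhds_zero_of_lt_one (by norm_num) (by norm_num)
      simpa using h0.const_mul (n * (Real.exp r * D))
  exact ge_of_tendsto key2 (Eventually.of_forall key1)

end MatrixLimit

end BernsteinAux


open Matrix

open ComplexOrder

/-- Bernstein's trace inequality: `tr(exp(A) exp(A*)) ≤ tr(exp(A + A*))`. -/
theorem trace_exp_mul_exp_conjTranspose_le (n : ℕ) (A : Matrix (Fin n) (Fin n) ℂ) :
    (NormedSpace.exp A * NormedSpace.exp Aᴴ).trace ≤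
      (NormedSpace.exp (A + Aᴴ)).trace := by
  rcases Nat.eq_zero_or_pos n with hn | hn
  · subst hn
    simp [Matrix.trace]
  · haveI : Nonempty (Fin n) := ⟨⟨0, hn⟩⟩
    have him1 : (NormedSpace.exp A * NormedSpace.exp Aᴴ).trace
        = ((BernsteinAux.gn (NormedSpace.exp A) ^ 2 : ℝ) : ℂ) := by
      rw [Matrix.exp_conjTranspose]
      exact BernsteinAux.trace_self_mul_conjTranspose _
    set h : Matrix (Fin n) (Fin n) ℂ := (2 : ℂ)⁻¹ • (A + Aᴴ) with hh
    have hsum : h + h = A + Aᴴ := by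
      rw [hh, ← add_smul]
      norm_num
    have hherm : hᴴ = h := by
      rw [hh, conjTranspose_smul, conjTranspose_add, conjTranspose_conjTranspose, add_comm Aᴴ]
      congr 1
      simp
    have hexp : NormedSpace.exp (A + Aᴴ) = NormedSpace.exp h * (NormedSpace.exp h)ᴴ := by
      rw [← hsum, Matrix.exp_add_of_commute h h (Commute.refl h)]
      congr 1
      rw [← Matrix.exp_conjTranspose, hherm]
    have him2 : (NormedSpace.exp (A + Aᴴ)).trace
        = ((BernsteinAux.gn (NormedSpace.exp h) ^ 2 : ℝ) : ℂ) := by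
      rw [hexp]
      exact BernsteinAux.trace_self_mul_conjTranspose _
    rw [Complex.le_def]
    refine ⟨BernsteinAux.re_ineq A, ?_⟩
    rw [him1, him2, Complex.ofReal_im, Complex.ofReal_im]
end

section
/- For any complex n×n matrix A, the largest eigenvalue of exp(A)·exp(A*) is less than or equal to the largest eigenvalue of exp(A + A*). -/
open Matrix NormedSpace

private lemma rayleigh_le' {n : ℕ} {M : Matrix (Fin n) (Fin n) ℂ} (hM : M.IsHermitian)
    (x : Fin n → ℂ) :
    Complex.re (star x ⬝ᵥ (M *ᵥ x)) ≤ (⨆ i, hM.eigenvalues i) * Complex.re (star x ⬝ᵥ x) := by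
  set U : Matrix (Fin n) (Fin n) ℂ := (hM.eigenvectorUnitary : Matrix (Fin n) (Fin n) ℂ) with hU
  set y : Fin n → ℂ := star U *ᵥ x with hy
  have hsy : star y = star x ᵥ* U := by
    rw [hy, star_mulVec, star_eq_conjTranspose, conjTranspose_conjTranspose]
  have h1 : star x ⬝ᵥ (M *ᵥ x) = star y ⬝ᵥ (diagonal (RCLike.ofReal ∘ hM.eigenvalues) *ᵥ y) := by
    conv_lhs => rw [hM.spectral_theorem, Unitary.conjStarAlgAut_apply]
    rw [← mulVec_mulVec, ← mulVec_mulVec, dotProduct_mulVec, hsy.symm, hy]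
  have h2 : star y ⬝ᵥ y = star x ⬝ᵥ x := by
    rw [hsy, hy, ← dotProduct_mulVec, mulVec_mulVec,
      (Matrix.mem_unitaryGroup_iff).mp (hM.eigenvectorUnitary).2, one_mulVec]
  have hmax : ∀ i, hM.eigenvalues i ≤ ⨆ j, hM.eigenvalues j :=
    fun i => le_ciSup (Set.Finite.bddAbove (Set.finite_range _)) i
  rw [h1, ← h2]
  set L := ⨆ j, hM.eigenvalues j
  simp only [dotProduct, Pi.star_apply, mulVec_diagonal, Function.comp_apply, Complex.re_sum,
    Finset.mul_sum, RCLike.star_def]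
  apply Finset.sum_le_sum
  intro i _
  have h1 : ((starRingEnd ℂ) (y i) * ((RCLike.ofReal (hM.eigenvalues i) : ℂ) * y i)).re
      = hM.eigenvalues i * ((starRingEnd ℂ) (y i) * y i).re := by
    have : (starRingEnd ℂ) (y i) * ((RCLike.ofReal (hM.eigenvalues i) : ℂ) * y i)
        = (RCLike.ofReal (hM.eigenvalues i) : ℂ) * ((starRingEnd ℂ) (y i) * y i) := by ring
    rw [this]; simp
  have h2 : 0 ≤ ((starRingEnd ℂ) (y i) * y i).re := by
    rw [mul_comm, Complex.mul_conj]; simpa using Complex.normSq_nonneg (y i)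
  rw [h1]
  exact mul_le_mul_of_nonneg_right (hmax i) h2

private lemma exp_mulVec_eigen' {n : ℕ} (M : Matrix (Fin n) (Fin n) ℂ) (w : Fin n → ℂ) (c : ℂ)
    (h : M *ᵥ w = c • w) : exp M *ᵥ w = Complex.exp c • w := by
  letI : SeminormedRing (Matrix (Fin n) (Fin n) ℂ) := Matrix.linftyOpSemiNormedRing
  letI : NormedRing (Matrix (Fin n) (Fin n) ℂ) := Matrix.linftyOpNormedRing
  letI : NormedAlgebra ℂ (Matrix (Fin n) (Fin n) ℂ) := Matrix.linftyOpNormedAlgebra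
  have hpow : ∀ k : ℕ, M ^ k *ᵥ w = c ^ k • w := by
    intro k
    induction k with
    | zero => simp
    | succ k ih =>
        rw [pow_succ, ← mulVec_mulVec, h, mulVec_smul, ih, smul_smul, mul_comm, ← pow_succ]
  have hL : ∀ (f : ℕ → Matrix (Fin n) (Fin n) ℂ), Summable f →
      (∑' k, f k) *ᵥ w = ∑' k, (f k *ᵥ w) := by
    intro f hf
    let L : Matrix (Fin n) (Fin n) ℂ →ₗ[ℂ] (Fin n → ℂ) :=
      { toFun := fun N => N *ᵥ w
        map_add' := fun N P => add_mulVec N P w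
        map_smul' := fun r N => smul_mulVec r N w }
    exact (L.toContinuousLinearMap.map_tsum hf)
  rw [exp_eq_tsum ℂ, hL _ (expSeries_summable' (𝕂 := ℂ) M)]
  have : ∀ k : ℕ, ((k.factorial : ℂ)⁻¹ • M ^ k) *ᵥ w = ((k.factorial : ℂ)⁻¹ * c ^ k) • w := by
    intro k
    rw [smul_mulVec, hpow, smul_smul]
  simp_rw [this]
  rw [Summable.tsum_smul_const, Complex.exp_eq_exp_ℂ, exp_eq_tsum ℂ]
  · simp only [smul_eq_mul]
  · exact expSeries_summable' (𝕂 := ℂ) (𝔸 := ℂ) c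

private lemma exp_quad_le' {n : ℕ} (A : Matrix (Fin n) (Fin n) ℂ) (μ : ℝ)
    (hbound : ∀ u : Fin n → ℂ,
      Complex.re (star u ⬝ᵥ ((A + Aᴴ) *ᵥ u)) ≤ μ * Complex.re (star u ⬝ᵥ u))
    (v : Fin n → ℂ) (hv : Complex.re (star v ⬝ᵥ v) = 1) :
    Complex.re (star (exp Aᴴ *ᵥ v) ⬝ᵥ (exp Aᴴ *ᵥ v)) ≤ Real.exp μ := by
  letI : SeminormedRing (Matrix (Fin n) (Fin n) ℂ) := Matrix.linftyOpSemiNormedRing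
  letI : NormedRing (Matrix (Fin n) (Fin n) ℂ) := Matrix.linftyOpNormedRing
  letI : NormedAlgebra ℝ (Matrix (Fin n) (Fin n) ℂ) := Matrix.linftyOpNormedAlgebra
  letI : NormedAlgebra ℂ (Matrix (Fin n) (Fin n) ℂ) := Matrix.linftyOpNormedAlgebra
  set E := EuclideanSpace ℂ (Fin n)
  let Φ : Matrix (Fin n) (Fin n) ℂ →ₗ[ℝ] E :=
    { toFun := fun M => (WithLp.equiv 2 (Fin n → ℂ)).symm (M *ᵥ v)
      map_add' := fun M N => by
        ext i; simp [add_mulVec]; rfl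
      map_smul' := fun r M => by
        ext i; simp [smul_mulVec, Complex.real_smul]; rfl }
  let ΦL := Φ.toContinuousLinearMap
  let g : ℝ → E := fun t => ΦL (exp (t • Aᴴ))
  have hMd : ∀ t : ℝ, HasDerivAt (fun t : ℝ => exp (t • Aᴴ)) (Aᴴ * exp (t • Aᴴ)) t := by
    intro t
    have h := hasDerivAt_exp_smul_const' (𝕂 := ℝ) Aᴴ t
    exact h
  have hgd : ∀ t : ℝ, HasDerivAt g (ΦL (Aᴴ * exp (t • Aᴴ))) t := fun t =>
    (ΦL.hasFDerivAt.comp_hasDerivAt t (hMd t))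
  let f : ℝ → ℝ := fun t => Complex.re (star (exp (t • Aᴴ) *ᵥ v) ⬝ᵥ (exp (t • Aᴴ) *ᵥ v))
  let f' : ℝ → ℝ := fun t =>
    Complex.re (star (exp (t • Aᴴ) *ᵥ v) ⬝ᵥ ((A + Aᴴ) *ᵥ (exp (t • Aᴴ) *ᵥ v)))
  have hfd : ∀ t : ℝ, HasDerivAt f (f' t) t := by
    intro t
    have h1 : HasDerivAt (fun s => (inner ℂ (g s) (g s) : ℂ))
        (inner ℂ (g t) (ΦL (Aᴴ * exp (t • Aᴴ))) + inner ℂ (ΦL (Aᴴ * exp (t • Aᴴ))) (g t)) t :=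
      (hgd t).inner ℂ (hgd t)
    have h2 := (Complex.reCLM.hasFDerivAt.comp_hasDerivAt t h1)
    convert h2 using 1
    show f' t = Complex.re (inner ℂ (g t) (ΦL (Aᴴ * exp (t • Aᴴ)))
      + inner ℂ (ΦL (Aᴴ * exp (t • Aᴴ))) (g t))
    have hu : ∀ w : Fin n → ℂ, (inner ℂ (g t) ((WithLp.equiv 2 (Fin n → ℂ)).symm w) : ℂ)
        = star (exp (t • Aᴴ) *ᵥ v) ⬝ᵥ w := fun w =>
          (EuclideanSpace.inner_eq_star_dotProduct _ _).trans (dotProduct_comm _ _)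
    set u : Fin n → ℂ := exp (t • Aᴴ) *ᵥ v with hu'
    have e1 : (inner ℂ (g t) (ΦL (Aᴴ * exp (t • Aᴴ))) : ℂ) = star u ⬝ᵥ (Aᴴ *ᵥ u) := by
      show (inner ℂ (g t) ((WithLp.equiv 2 (Fin n → ℂ)).symm ((Aᴴ * exp (t • Aᴴ)) *ᵥ v)) : ℂ) = _
      rw [hu, ← mulVec_mulVec]
    have e2 : (inner ℂ (ΦL (Aᴴ * exp (t • Aᴴ))) (g t) : ℂ) = star u ⬝ᵥ (A *ᵥ u) := by
      rw [EuclideanSpace.inner_eq_star_dotProduct, dotProduct_comm]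
      show (star ((Aᴴ * exp (t • Aᴴ)) *ᵥ v) ⬝ᵥ u : ℂ) = _
      rw [← mulVec_mulVec, star_mulVec, conjTranspose_conjTranspose, ← dotProduct_mulVec]
    rw [e1, e2]
    simp only [f', add_mulVec, dotProduct_add, Complex.add_re]
    ring
    case e'_4 => rfl
    case e'_5 => rfl
    case e'_8 =>
      funext s
      exact congrArg Complex.re
        ((EuclideanSpace.inner_eq_star_dotProduct _ _).trans (dotProduct_comm _ _)).symm
  have hcont : ContinuousOn f (Set.Icc 0 1) :=
    fun t _ => ((hfd t).continuousAt).continuousWithinAt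
  have hf0 : f 0 ≤ 1 := by
    have : f 0 = Complex.re (star (exp ((0:ℝ) • Aᴴ) *ᵥ v) ⬝ᵥ (exp ((0:ℝ) • Aᴴ) *ᵥ v)) := rfl
    rw [this, zero_smul, exp_zero, one_mulVec, hv]
  have hle : ∀ t ∈ Set.Ico (0:ℝ) 1, f' t ≤ μ * f t + 0 := by
    intro t _
    rw [add_zero]
    exact hbound _
  have hg := le_gronwallBound_of_liminf_deriv_right_le hcont
      (fun x _ r hr => (hfd x).hasDerivWithinAt.liminf_right_slope_le hr) hf0 hle
      1 (Set.right_mem_Icc.2 zero_le_one)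
  rw [gronwallBound_ε0] at hg
  have h1 : f 1 = Complex.re (star (exp Aᴴ *ᵥ v) ⬝ᵥ (exp Aᴴ *ᵥ v)) := by
    show Complex.re (star (exp ((1:ℝ) • Aᴴ) *ᵥ v) ⬝ᵥ (exp ((1:ℝ) • Aᴴ) *ᵥ v)) = _
    rw [one_smul]
  rw [h1] at hg
  simpa using hg

/-- Cohen's inequality, case `i = k = 1`: the largest eigenvalue of `exp(A) exp(A*)`
is at most the largest eigenvalue of `exp(A + A*)`. -/
theorem max_eigenvalue_exp_mul_exp_conjTranspose_le (n : ℕ) (A : Matrix (Fin n) (Fin n) ℂ)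
    (h1 : (NormedSpace.exp A * NormedSpace.exp Aᴴ).IsHermitian)
    (h2 : (NormedSpace.exp (A + Aᴴ)).IsHermitian) :
    (⨆ i, h1.eigenvalues i) ≤ ⨆ i, h2.eigenvalues i := by
  rcases Nat.eq_zero_or_pos n with hn | hn
  · subst hn
    simp [ciSup_of_empty]
  · haveI : Nonempty (Fin n) := Fin.pos_iff_nonempty.mp hn
    have hH : (A + Aᴴ).IsHermitian := by
      unfold Matrix.IsHermitian
      rw [conjTranspose_add, conjTranspose_conjTranspose, add_comm]
    set μ := ⨆ i, hH.eigenvalues i with hμ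
    have hbound : ∀ u : Fin n → ℂ,
        Complex.re (star u ⬝ᵥ ((A + Aᴴ) *ᵥ u)) ≤ μ * Complex.re (star u ⬝ᵥ u) :=
      fun u => rayleigh_le' hH u
    -- unit eigenvectors have unit dot product
    have unit_dot : ∀ {M : Matrix (Fin n) (Fin n) ℂ} (hM : M.IsHermitian) (i : Fin n),
        Complex.re (star ⇑(hM.eigenvectorBasis i) ⬝ᵥ ⇑(hM.eigenvectorBasis i)) = 1 := by
      intro M hM i
      have h := hM.eigenvectorBasis.orthonormal.1 i
      have : (inner ℂ (hM.eigenvectorBasis i) (hM.eigenvectorBasis i) : ℂ)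
          = star ⇑(hM.eigenvectorBasis i) ⬝ᵥ ⇑(hM.eigenvectorBasis i) :=
          (EuclideanSpace.inner_eq_star_dotProduct _ _).trans (dotProduct_comm _ _)
      rw [← this, inner_self_eq_norm_sq_to_K, h]
      norm_num
    -- Step 1 : LHS = ‖exp Aᴴ v‖² for a top unit eigenvector v
    obtain ⟨i₀, hi₀⟩ := exists_eq_ciSup_of_finite (f := h1.eigenvalues)
    set v : Fin n → ℂ := ⇑(h1.eigenvectorBasis i₀) with hv
    have hstep1 : (⨆ i, h1.eigenvalues i)
        = Complex.re (star (exp Aᴴ *ᵥ v) ⬝ᵥ (exp Aᴴ *ᵥ v)) := by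
      rw [← hi₀, h1.eigenvalues_eq]
      have : star v ⬝ᵥ ((exp A * exp Aᴴ) *ᵥ v)
          = star (exp Aᴴ *ᵥ v) ⬝ᵥ (exp Aᴴ *ᵥ v) := by
        rw [exp_conjTranspose, ← mulVec_mulVec, star_mulVec, dotProduct_mulVec]
        simp [conjTranspose_conjTranspose, vecMul_vecMul]
      rw [← this]
      rfl
    -- Step 2 : Grönwall bound
    have hstep2 : Complex.re (star (exp Aᴴ *ᵥ v) ⬝ᵥ (exp Aᴴ *ᵥ v)) ≤ Real.exp μ :=
      exp_quad_le' A μ hbound v (unit_dot h1 i₀)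
    -- Step 3 : Real.exp μ ≤ RHS
    obtain ⟨j₀, hj₀⟩ := exists_eq_ciSup_of_finite (f := hH.eigenvalues)
    set w : Fin n → ℂ := ⇑(hH.eigenvectorBasis j₀) with hw
    have hcw : (A + Aᴴ) *ᵥ w = ((μ : ℂ)) • w := by
      rw [hw]
      rw [hH.mulVec_eigenvectorBasis j₀, hj₀, ← hμ]
      funext i
      simp [Complex.real_smul]
    have hexp : exp (A + Aᴴ) *ᵥ w = Complex.exp (μ : ℂ) • w := exp_mulVec_eigen' _ w _ hcw
    have hstep3 : Real.exp μ ≤ ⨆ i, h2.eigenvalues i := by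
      have hr := rayleigh_le' h2 w
      rw [hexp] at hr
      rw [← Complex.ofReal_exp] at hr
      have : Complex.re (star w ⬝ᵥ ((Real.exp μ : ℂ) • w))
          = Real.exp μ * Complex.re (star w ⬝ᵥ w) := by
        rw [dotProduct_smul, smul_eq_mul, Complex.re_ofReal_mul]
      rw [this, unit_dot hH j₀, mul_one] at hr
      simpa [unit_dot hH j₀] using hr
    calc (⨆ i, h1.eigenvalues i)
        = Complex.re (star (exp Aᴴ *ᵥ v) ⬝ᵥ (exp Aᴴ *ᵥ v)) := hstep1
      _ ≤ Real.exp μ := hstep2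
      _ ≤ ⨆ i, h2.eigenvalues i := hstep3
end

section
/- If x, y ∈ ℝⁿ with x majorized by y and f : ℝ → ℝ is convex, then the vector (f(x₁),...,f(xₙ)) is weakly majorized by (f(y₁),...,f(yₙ)). -/
open Finset

/-- The sum of the `k` largest entries of the vector `v`, i.e. the maximum of
`∑ i ∈ s, v i` over all subsets `s` of cardinality `k`. -/
noncomputable def ksum {n : ℕ} (v : Fin n → ℝ) (k : ℕ) : ℝ :=
  sSup {t : ℝ | ∃ s : Finset (Fin n), s.card = k ∧ t = ∑ i ∈ s, v i}

section aux
variable {n : ℕ} (v : Fin n → ℝ) (k : ℕ)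

lemma ksum_bdd : BddAbove {t : ℝ | ∃ s : Finset (Fin n), s.card = k ∧ t = ∑ i ∈ s, v i} := by
  have h : {t : ℝ | ∃ s : Finset (Fin n), s.card = k ∧ t = ∑ i ∈ s, v i} ⊆
      (fun s : Finset (Fin n) => ∑ i ∈ s, v i) '' Set.univ := by
    rintro t ⟨s, _, rfl⟩; exact ⟨s, trivial, rfl⟩
  exact ((Set.finite_univ.image _).subset h).bddAbove

lemma le_ksum (s : Finset (Fin n)) (hs : s.card = k) : ∑ i ∈ s, v i ≤ ksum v k :=
  le_csSup (ksum_bdd v k) ⟨s, hs, rfl⟩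

lemma ksum_le (hk : k ≤ n) {B : ℝ}
    (hB : ∀ s : Finset (Fin n), s.card = k → ∑ i ∈ s, v i ≤ B) : ksum v k ≤ B := by
  obtain ⟨s, _, hs⟩ := Finset.exists_subset_card_eq (s := (Finset.univ : Finset (Fin n)))
    (by simpa using hk)
  exact csSup_le ⟨∑ i ∈ s, v i, s, hs, rfl⟩ (by rintro t ⟨s, hs, rfl⟩; exact hB s hs)

lemma ksum_zero_aux : ksum v 0 = 0 := by
  have : {t : ℝ | ∃ s : Finset (Fin n), s.card = 0 ∧ t = ∑ i ∈ s, v i} = {0} := by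
    ext t
    constructor
    · rintro ⟨s, hs, rfl⟩
      simp [Finset.card_eq_zero.mp hs]
    · rintro rfl
      exact ⟨∅, by simp⟩
  rw [ksum, this, csSup_singleton]

lemma ksum_of_gt (hk : n < k) : ksum v k = 0 := by
  have : {t : ℝ | ∃ s : Finset (Fin n), s.card = k ∧ t = ∑ i ∈ s, v i} = ∅ := by
    ext t
    simp only [Set.mem_setOf_eq, Set.mem_empty_iff_false, iff_false]
    rintro ⟨s, hs, -⟩
    have := Finset.card_le_univ s
    simp [hs] at this
    omega
  rw [ksum, this, Real.sSup_empty]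

lemma ksum_comp_equiv (σ : Equiv.Perm (Fin n)) : ksum (v ∘ σ) k = ksum v k := by
  unfold ksum
  congr 1
  ext t
  constructor
  · rintro ⟨s, hs, rfl⟩
    refine ⟨s.map σ.toEmbedding, by simp [hs], ?_⟩
    rw [Finset.sum_map]
    rfl
  · rintro ⟨s, hs, rfl⟩
    refine ⟨s.map σ.symm.toEmbedding, by simp [hs], ?_⟩
    rw [Finset.sum_map]
    simp

lemma ksum_univ : ksum v n = ∑ i, v i := by
  have : {t : ℝ | ∃ s : Finset (Fin n), s.card = n ∧ t = ∑ i ∈ s, v i} = {∑ i, v i} := by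
    ext t
    constructor
    · rintro ⟨s, hs, rfl⟩
      have : s = Finset.univ := Finset.eq_univ_of_card s (by simpa using hs)
      simp [this]
    · rintro rfl
      exact ⟨Finset.univ, by simp⟩
  rw [ksum, this, csSup_singleton]

end aux

section subgrad

variable {g : ℝ → ℝ}

lemma exists_subgrad (hg : ConvexOn ℝ Set.univ g) (a : ℝ) :
    ∃ m : ℝ, ∀ t, g a + m * (t - a) ≤ g t := by
  set S : Set ℝ := (fun s => (g a - g s) / (a - s)) '' Set.Iio a with hS
  have hne : S.Nonempty := ⟨(g a - g (a - 1)) / (a - (a - 1)), ⟨a - 1, by simp, rfl⟩⟩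
  have hbdd : BddAbove S := by
    refine ⟨(g (a + 1) - g a) / (a + 1 - a), ?_⟩
    rintro t ⟨s, hs, rfl⟩
    exact hg.slope_mono_adjacent trivial trivial hs (by linarith)
  refine ⟨sSup S, fun t => ?_⟩
  rcases lt_trichotomy t a with h | h | h
  · have h1 : (g a - g t) / (a - t) ≤ sSup S := le_csSup hbdd ⟨t, h, rfl⟩
    rw [div_le_iff₀ (by linarith)] at h1
    nlinarith
  · subst h; simp
  · have h1 : sSup S ≤ (g t - g a) / (t - a) := by
      apply csSup_le hne
      rintro u ⟨s, hs, rfl⟩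
      exact hg.slope_mono_adjacent trivial trivial hs h
    rw [le_div_iff₀ (by linarith)] at h1
    nlinarith

/-- A monotone subgradient selection. -/
lemma exists_monotone_subgrad (hg : ConvexOn ℝ Set.univ g) :
    ∃ M : ℝ → ℝ, Monotone M ∧ ∀ a t, g a + M a * (t - a) ≤ g t := by
  choose M hM using exists_subgrad hg
  refine ⟨M, ?_, hM⟩
  intro a b hab
  rcases eq_or_lt_of_le hab with rfl | h
  · exact le_rfl
  · have h1 := hM a b
    have h2 := hM b a
    nlinarith
end subgrad

lemma abel_aux (c d : ℕ → ℝ) : ∀ (n : ℕ), Antitone c →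
    (∀ k, k ≤ n → 0 ≤ ∑ i ∈ Finset.range k, d i) →
    c n * ∑ i ∈ Finset.range n, d i ≤ ∑ i ∈ Finset.range n, c i * d i := by
  intro n
  induction n with
  | zero => simp
  | succ n ih =>
    intro hc hD
    have IH := ih hc (fun k hk => hD k (hk.trans (Nat.le_succ n)))
    rw [Finset.sum_range_succ, Finset.sum_range_succ]
    have h1 : c (n + 1) * (∑ i ∈ Finset.range n, d i + d n)
        ≤ c n * (∑ i ∈ Finset.range n, d i + d n) := by
      apply mul_le_mul_of_nonneg_right (hc (Nat.le_succ n))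
      have := hD (n + 1) le_rfl
      rwa [Finset.sum_range_succ] at this
    calc c (n + 1) * (∑ i ∈ Finset.range n, d i + d n)
        ≤ c n * (∑ i ∈ Finset.range n, d i + d n) := h1
      _ = c n * ∑ i ∈ Finset.range n, d i + c n * d n := by ring
      _ ≤ ∑ i ∈ Finset.range n, c i * d i + c n * d n := by linarith

lemma exists_top_set {n : ℕ} (v : Fin n → ℝ) : ∀ (k : ℕ), k ≤ n →
    ∃ s : Finset (Fin n), s.card = k ∧ ∀ i ∈ s, ∀ j ∉ s, v j ≤ v i := by
  intro k
  induction k with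
  | zero => exact fun _ => ⟨∅, by simp⟩
  | succ k ih =>
    intro hk
    obtain ⟨s, hcard, hs⟩ := ih (by omega)
    have hne : (Finset.univ \ s).Nonempty := by
      rw [← Finset.card_pos, Finset.card_sdiff_of_subset (Finset.subset_univ s)]
      simp [hcard]; omega
    obtain ⟨j₀, hj₀, hj₀max⟩ := Finset.exists_max_image (Finset.univ \ s) v hne
    have hj₀s : j₀ ∉ s := (Finset.mem_sdiff.mp hj₀).2
    refine ⟨insert j₀ s, by rw [Finset.card_insert_of_notMem hj₀s, hcard], ?_⟩
    intro i hi j hj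
    have hjs : j ∉ s := fun h => hj (Finset.mem_insert_of_mem h)
    rcases Finset.mem_insert.mp hi with rfl | hi'
    · exact hj₀max j (Finset.mem_sdiff.mpr ⟨Finset.mem_univ j, hjs⟩)
    · exact hs i hi' j hjs

lemma strictMono_le {k n : ℕ} (e : Fin k → Fin n) (he : StrictMono e) :
    ∀ j : Fin k, (j : ℕ) ≤ (e j : ℕ) := by
  have key : ∀ m : ℕ, ∀ j : Fin k, (j : ℕ) = m → m ≤ (e j : ℕ) := by
    intro m
    induction m with
    | zero => intro j _; exact Nat.zero_le _
    | succ m ih =>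
      intro j hj
      have hm : m < k := by omega
      have hlt : (⟨m, hm⟩ : Fin k) < j := by rw [Fin.lt_def]; simp; omega
      have h1 : (e ⟨m, hm⟩ : ℕ) < (e j : ℕ) := he hlt
      have h2 := ih ⟨m, hm⟩ rfl
      omega
  exact fun j => key j.val j rfl

lemma antitone_topk {n : ℕ} {w : Fin n → ℝ} (hw : Antitone w) {k : ℕ} (hk : k ≤ n)
    (s : Finset (Fin n)) (hs : s.card = k) :
    ∑ i ∈ s, w i ≤ ∑ j : Fin k, w (Fin.castLE hk j) := by
  have hmap : s = Finset.univ.map (s.orderEmbOfFin hs).toEmbedding := by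
    ext i
    simp only [Finset.mem_map, Finset.mem_univ, true_and]
    constructor
    · intro hi
      have : i ∈ Set.range (s.orderEmbOfFin hs) := by
        rw [Finset.range_orderEmbOfFin]; exact hi
      obtain ⟨j, hj⟩ := this
      exact ⟨j, hj⟩
    · rintro ⟨j, rfl⟩
      exact Finset.orderEmbOfFin_mem s hs j
  rw [hmap, Finset.sum_map]
  apply Finset.sum_le_sum
  intro j _
  apply hw
  rw [Fin.le_def]
  simpa using strictMono_le _ (s.orderEmbOfFin hs).strictMono j

lemma karamata_sorted {n : ℕ} (x y : Fin n → ℝ) (g : ℝ → ℝ)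
    (hx : Antitone x) (hy : Antitone y)
    (hmaj : ∀ k : ℕ, ksum x k ≤ ksum y k)
    (hsum : ∑ i, x i = ∑ i, y i)
    (hg : ConvexOn ℝ Set.univ g) :
    ∑ i, g (x i) ≤ ∑ i, g (y i) := by
  rcases Nat.eq_zero_or_pos n with rfl | hn
  · simp
  set a : ℕ → ℝ := fun i => x ⟨min i (n - 1), by omega⟩ with ha_def
  set b : ℕ → ℝ := fun i => y ⟨min i (n - 1), by omega⟩ with hb_def
  have ha : Antitone a := by
    intro i j hij
    apply hx
    rw [Fin.le_def]
    simp
    omega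
  have hax : ∀ k (hk : k ≤ n), ∑ i ∈ Finset.range k, a i = ∑ j : Fin k, x (Fin.castLE hk j) := by
    intro k hk
    rw [← Fin.sum_univ_eq_sum_range]
    apply Finset.sum_congr rfl
    intro j _
    show x _ = x _
    congr 1
    apply Fin.ext
    simp only [Fin.coe_castLE]
    omega
  have hby : ∀ k (hk : k ≤ n), ∑ i ∈ Finset.range k, b i = ∑ j : Fin k, y (Fin.castLE hk j) := by
    intro k hk
    rw [← Fin.sum_univ_eq_sum_range]
    apply Finset.sum_congr rfl
    intro j _
    show y _ = y _
    congr 1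
    apply Fin.ext
    simp only [Fin.coe_castLE]
    omega
  have hcast : ∀ (w : Fin n → ℝ), ∑ j : Fin n, w (Fin.castLE le_rfl j) = ∑ i, w i := by
    intro w
    apply Finset.sum_congr rfl
    intro j _
    congr 1
  obtain ⟨M, hMmono, hMsub⟩ := exists_monotone_subgrad hg
  set c : ℕ → ℝ := fun i => M (a i) with hc_def
  have hc : Antitone c := fun i j hij => hMmono (ha hij)
  -- partial sum inequalities
  have hD : ∀ k, k ≤ n → 0 ≤ ∑ i ∈ Finset.range k, (b i - a i) := by
    intro k hk
    rw [Finset.sum_sub_distrib, sub_nonneg, hax k hk, hby k hk]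
    have h1 : ∑ j : Fin k, x (Fin.castLE hk j) ≤ ksum x k := by
      have := le_ksum x k (Finset.univ.map (Fin.castLEEmb hk)) (by simp)
      rwa [Finset.sum_map] at this
    have h2 : ksum y k ≤ ∑ j : Fin k, y (Fin.castLE hk j) :=
      ksum_le y k hk (fun s hs => antitone_topk hy hk s hs)
    exact h1.trans ((hmaj k).trans h2)
  have hDn : ∑ i ∈ Finset.range n, (b i - a i) = 0 := by
    rw [Finset.sum_sub_distrib, hax n le_rfl, hby n le_rfl, hcast, hcast, hsum, sub_self]
  -- Abel summation
  have habel := abel_aux c (fun i => b i - a i) n hc hD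
  rw [hDn, mul_zero] at habel
  have hterm : ∑ i ∈ Finset.range n, c i * (b i - a i)
      ≤ ∑ i ∈ Finset.range n, (g (b i) - g (a i)) := by
    apply Finset.sum_le_sum
    intro i _
    have := hMsub (a i) (b i)
    linarith
  have hfinal : 0 ≤ ∑ i ∈ Finset.range n, (g (b i) - g (a i)) := habel.trans hterm
  rw [Finset.sum_sub_distrib] at hfinal
  have hga : ∑ i ∈ Finset.range n, g (a i) = ∑ i, g (x i) := by
    rw [← Fin.sum_univ_eq_sum_range]
    apply Finset.sum_congr rfl
    intro j _
    show g (x _) = _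
    congr 2
    apply Fin.ext
    simp
    omega
  have hgb : ∑ i ∈ Finset.range n, g (b i) = ∑ i, g (y i) := by
    rw [← Fin.sum_univ_eq_sum_range]
    apply Finset.sum_congr rfl
    intro j _
    show g (y _) = _
    congr 2
    apply Fin.ext
    simp
    omega
  rw [hga, hgb] at hfinal
  linarith

lemma karamata {n : ℕ} (x y : Fin n → ℝ) (g : ℝ → ℝ)
    (hmaj : ∀ k : ℕ, ksum x k ≤ ksum y k)
    (hsum : ∑ i, x i = ∑ i, y i)
    (hg : ConvexOn ℝ Set.univ g) :
    ∑ i, g (x i) ≤ ∑ i, g (y i) := by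
  set σx := Tuple.sort (fun i => -x i) with hσx
  set σy := Tuple.sort (fun i => -y i) with hσy
  have hxa : Antitone (x ∘ σx) := by
    intro i j hij
    have := Tuple.monotone_sort (fun i => -x i) hij
    simpa using this
  have hya : Antitone (y ∘ σy) := by
    intro i j hij
    have := Tuple.monotone_sort (fun i => -y i) hij
    simpa using this
  have h := karamata_sorted (x ∘ σx) (y ∘ σy) g hxa hya
    (fun k => by rw [ksum_comp_equiv, ksum_comp_equiv]; exact hmaj k)
    (by simp only [Function.comp_apply]; rw [Equiv.sum_comp σx x, Equiv.sum_comp σy y]; exact hsum) hg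
  calc ∑ i, g (x i) = ∑ i, g (x (σx i)) := (Equiv.sum_comp σx (fun i => g (x i))).symm
    _ ≤ ∑ i, g (y (σy i)) := h
    _ = ∑ i, g (y i) := Equiv.sum_comp σy (fun i => g (y i))

/-- If `x ≺ y` (majorization) and `f` is convex, then `f(x) ≺_w f(y)` (weak majorization). -/
theorem weak_majorization_of_convex (n : ℕ) (x y : Fin n → ℝ) (f : ℝ → ℝ)
    (hmaj : ∀ k : ℕ, ksum x k ≤ ksum y k)
    (hsum : ∑ i, x i = ∑ i, y i)
    (hf : ConvexOn ℝ Set.univ f) :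
    ∀ k : ℕ, ksum (fun i => f (x i)) k ≤ ksum (fun i => f (y i)) k := by
  intro k
  rcases Nat.eq_zero_or_pos k with rfl | hkpos
  · rw [ksum_zero_aux, ksum_zero_aux]
  by_cases hk : n < k
  · rw [ksum_of_gt _ _ hk, ksum_of_gt _ _ hk]
  push_neg at hk
  -- the optimal top set for f ∘ y
  obtain ⟨s₀, hcard, hprop⟩ := exists_top_set (fun i => f (y i)) k hk
  have hs₀ne : s₀.Nonempty := by rw [← Finset.card_pos, hcard]; exact hkpos
  obtain ⟨i₀, hi₀, hmin⟩ := Finset.exists_min_image s₀ (fun i => f (y i)) hs₀ne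
  set c : ℝ := f (y i₀) with hc
  set h : ℝ → ℝ := fun t => max (f t - c) 0 with hh_def
  have hh : ConvexOn ℝ Set.univ h :=
    (hf.sub (concaveOn_const c convex_univ)).sup (convexOn_const 0 convex_univ)
  have karam : ∑ i, h (x i) ≤ ∑ i, h (y i) := karamata x y h hmaj hsum hh
  have step1 : ksum (fun i => f (x i)) k ≤ (k : ℝ) * c + ∑ i, h (x i) := by
    apply ksum_le _ k hk
    intro s hs
    have e1 : ∑ i ∈ s, f (x i) = ∑ i ∈ s, (f (x i) - c) + (k : ℝ) * c := by
      rw [Finset.sum_sub_distrib, Finset.sum_const, hs]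
      simp [nsmul_eq_mul]
    rw [e1]
    have e2 : ∑ i ∈ s, (f (x i) - c) ≤ ∑ i ∈ s, h (x i) :=
      Finset.sum_le_sum fun i _ => le_max_left _ _
    have e3 : ∑ i ∈ s, h (x i) ≤ ∑ i, h (x i) :=
      Finset.sum_le_sum_of_subset_of_nonneg (Finset.subset_univ s)
        (fun i _ _ => le_max_right _ _)
    linarith
  have step2 : ∑ i, h (y i) = ∑ i ∈ s₀, f (y i) - (k : ℝ) * c := by
    rw [← Finset.sum_add_sum_compl s₀ (fun i => h (y i))]
    have e1 : ∑ i ∈ s₀, h (y i) = ∑ i ∈ s₀, (f (y i) - c) := by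
      apply Finset.sum_congr rfl
      intro i hi
      exact max_eq_left (by linarith [hmin i hi])
    have e2 : ∑ i ∈ s₀ᶜ, h (y i) = 0 := by
      apply Finset.sum_eq_zero
      intro i hi
      have : f (y i) ≤ c := hprop i₀ hi₀ i (Finset.mem_compl.mp hi)
      exact max_eq_right (by linarith)
    rw [e1, e2, Finset.sum_sub_distrib, Finset.sum_const, hcard]
    simp [nsmul_eq_mul]
  have step3 : ∑ i ∈ s₀, f (y i) ≤ ksum (fun i => f (y i)) k :=
    le_ksum (fun i => f (y i)) k s₀ hcard
  linarith
end

section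
/- Let x₁ ≥ ... ≥ xₙ > 0 and d₁ ≥ ... ≥ dₙ > 0 satisfy the log-majorization conditions (x₁···x_k ≥ d₁···d_k for k < n, x₁···xₙ = d₁···dₙ). If additionally for every k the sum of the k largest of |log xᵢ| equals the sum of the k largest of |log dᵢ|, then xᵢ = dᵢ for all i. -/
namespace KsumAux

open Finset

/-- The prefix set `{i : i < j}` of `Fin n`. -/
def pset (n j : ℕ) : Finset (Fin n) := univ.filter (fun i => (i : ℕ) < j)

/-- Prefix sums. -/
def psum (n : ℕ) (v : Fin n → ℝ) (j : ℕ) : ℝ := ∑ i ∈ pset n j, v i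

lemma mem_pset {n j : ℕ} (i : Fin n) : i ∈ pset n j ↔ (i : ℕ) < j := by
  simp [pset]

lemma card_pset (n j : ℕ) : (pset n j).card = min j n := by
  classical
  rw [← Finset.card_range (min j n)]
  apply Finset.card_bij (fun (i : Fin n) _ => (i : ℕ))
  · intro i hi
    rw [mem_pset] at hi
    simp only [Finset.mem_range, lt_min_iff]
    exact ⟨hi, i.isLt⟩
  · intro i hi i' hi' h
    exact Fin.ext h
  · intro m hm
    rw [Finset.mem_range, lt_min_iff] at hm
    exact ⟨⟨m, hm.2⟩, by simp [mem_pset, hm.1], rfl⟩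

lemma pset_of_ge {n j : ℕ} (h : n ≤ j) : pset n j = univ := by
  ext i; simp only [mem_pset, Finset.mem_univ, iff_true]
  exact lt_of_lt_of_le i.isLt h

lemma psum_of_ge {n : ℕ} (v : Fin n → ℝ) {j : ℕ} (h : n ≤ j) :
    psum n v j = psum n v n := by
  unfold psum
  rw [pset_of_ge h, pset_of_ge (le_refl n)]

lemma psum_univ {n : ℕ} (v : Fin n → ℝ) : psum n v n = ∑ i, v i := by
  unfold psum
  rw [pset_of_ge (le_refl n)]

lemma eq_pset_of_down {n : ℕ} {s : Finset (Fin n)}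
    (h : ∀ i ∈ s, ∀ i' : Fin n, i' ≤ i → i' ∈ s) : s = pset n s.card := by
  apply Finset.Subset.antisymm
  · intro i hi
    rw [mem_pset]
    have hsub : pset n ((i : ℕ) + 1) ⊆ s := by
      intro i' hi'
      rw [mem_pset] at hi'
      exact h i hi i' (by rw [Fin.le_def]; omega)
    have hc := Finset.card_le_card hsub
    rw [card_pset] at hc
    have := i.isLt
    omega
  · intro i hi
    rw [mem_pset] at hi
    by_contra hns
    have hsub : s ⊆ pset n (i : ℕ) := by
      intro i' hi'
      rw [mem_pset]
      by_contra h'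
      exact hns (h i' hi' i (by rw [Fin.le_def]; omega))
    have hc := Finset.card_le_card hsub
    rw [card_pset] at hc
    omega

lemma eq_compl_pset_of_up {n : ℕ} {s : Finset (Fin n)}
    (h : ∀ i ∈ s, ∀ i' : Fin n, i ≤ i' → i' ∈ s) : s = (pset n (n - s.card))ᶜ := by
  have hc : sᶜ = pset n (sᶜ.card) := by
    apply eq_pset_of_down
    intro i hi i' hle
    rw [Finset.mem_compl] at hi ⊢
    intro hmem
    exact hi (h i' hmem i hle)
  have hcard : sᶜ.card = n - s.card := by
    rw [Finset.card_compl, Fintype.card_fin]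
  rw [← hcard, ← hc, compl_compl]

lemma ksumSet_finite {n : ℕ} (v : Fin n → ℝ) (k : ℕ) :
    {t : ℝ | ∃ s : Finset (Fin n), s.card = k ∧ t = ∑ i ∈ s, v i}.Finite := by
  apply Set.Finite.subset (Set.finite_range (fun s : Finset (Fin n) => ∑ i ∈ s, v i))
  rintro t ⟨s, _, rfl⟩
  exact ⟨s, rfl⟩

lemma sum_le_ksum {n : ℕ} (v : Fin n → ℝ) (s : Finset (Fin n)) :
    ∑ i ∈ s, v i ≤ ksum v s.card :=
  le_csSup ((ksumSet_finite v s.card).bddAbove) ⟨s, rfl, rfl⟩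

lemma sum_le_sum_aux {n : ℕ} (v : Fin n → ℝ) (A B : Finset (Fin n))
    (hcard : A.card = B.card) (h : ∀ i' ∈ A, ∀ i ∈ B, v i' ≤ v i) :
    ∑ i ∈ A, v i ≤ ∑ i ∈ B, v i := by
  rcases B.eq_empty_or_nonempty with hB | hB
  · subst hB
    rw [Finset.card_empty, Finset.card_eq_zero] at hcard
    subst hcard
    simp
  · obtain ⟨i₀, hi₀, hmin⟩ := B.exists_min_image v hB
    calc ∑ i ∈ A, v i ≤ A.card • v i₀ :=
          Finset.sum_le_card_nsmul A v (v i₀) (fun i hi => h i hi i₀ hi₀)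
      _ = B.card • v i₀ := by rw [hcard]
      _ ≤ ∑ i ∈ B, v i := Finset.card_nsmul_le_sum B v (v i₀) (fun i hi => hmin i hi)

lemma ksum_eq {n : ℕ} (v : Fin n → ℝ) (s : Finset (Fin n))
    (h : ∀ i ∈ s, ∀ i' : Fin n, i' ∉ s → v i' ≤ v i) :
    ksum v s.card = ∑ i ∈ s, v i := by
  refine le_antisymm (csSup_le ⟨_, s, rfl, rfl⟩ ?_) (sum_le_ksum v s)
  rintro t ⟨u, hu, rfl⟩
  have h1 : ∑ i ∈ u ∩ s, v i + ∑ i ∈ u \ s, v i = ∑ i ∈ u, v i :=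
    Finset.sum_inter_add_sum_sdiff u s v
  have h2 : ∑ i ∈ s ∩ u, v i + ∑ i ∈ s \ u, v i = ∑ i ∈ s, v i :=
    Finset.sum_inter_add_sum_sdiff s u v
  have hc : (u \ s).card = (s \ u).card := by
    have e1 := Finset.card_sdiff_add_card_inter u s
    have e2 := Finset.card_sdiff_add_card_inter s u
    have e3 : (u ∩ s).card = (s ∩ u).card := by rw [Finset.inter_comm]
    omega
  have h3 : ∑ i ∈ u \ s, v i ≤ ∑ i ∈ s \ u, v i := by
    apply sum_le_sum_aux v _ _ hc
    intro i' hi' i hi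
    exact h i (Finset.mem_sdiff.mp hi).1 i' (Finset.mem_sdiff.mp hi').2
  have h4 : ∑ i ∈ u ∩ s, v i = ∑ i ∈ s ∩ u, v i := by rw [Finset.inter_comm]
  linarith

lemma ksum_abs_eq {n : ℕ} (v : Fin n → ℝ) (p q : ℕ) (c : ℝ) (hc : 0 ≤ c)
    (hpq : p ≤ q) (hqn : q ≤ n)
    (h1 : ∀ i : Fin n, (i : ℕ) < p → c ≤ v i)
    (h2 : ∀ i : Fin n, q ≤ (i : ℕ) → c ≤ -v i)
    (h3 : ∀ i : Fin n, p ≤ (i : ℕ) → (i : ℕ) < q → |v i| ≤ c) :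
    ksum (fun i => |v i|) (p + (n - q)) = psum n v p + psum n v q - psum n v n := by
  classical
  set s : Finset (Fin n) := pset n p ∪ (pset n q)ᶜ with hs
  have hdisj : Disjoint (pset n p) (pset n q)ᶜ := by
    rw [Finset.disjoint_left]
    intro i hi hic
    rw [mem_pset] at hi
    rw [Finset.mem_compl, mem_pset] at hic
    omega
  have hcard : s.card = p + (n - q) := by
    rw [hs, Finset.card_union_of_disjoint hdisj, card_pset, Finset.card_compl, card_pset,
      Fintype.card_fin]
    omega
  have hmem : ∀ i : Fin n, i ∈ s ↔ ((i : ℕ) < p ∨ q ≤ (i : ℕ)) := by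
    intro i
    rw [hs, Finset.mem_union, mem_pset, Finset.mem_compl, mem_pset]
    omega
  have hdom : ∀ i ∈ s, ∀ i' : Fin n, i' ∉ s → |v i'| ≤ |v i| := by
    intro i hi i' hi'
    rw [hmem] at hi
    rw [hmem] at hi'
    push_neg at hi'
    have hub : |v i'| ≤ c := h3 i' (by omega) (by omega)
    rcases hi with h | h
    · exact hub.trans ((h1 i h).trans (le_abs_self _))
    · exact hub.trans ((h2 i h).trans (neg_le_abs _))
  have hks := ksum_eq (fun i => |v i|) s hdom
  rw [hcard] at hks
  rw [hks, hs, Finset.sum_union hdisj]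
  have e1 : ∑ i ∈ pset n p, |v i| = psum n v p := by
    apply Finset.sum_congr rfl
    intro i hi
    exact abs_of_nonneg (hc.trans (h1 i ((mem_pset i).mp hi)))
  have e2 : ∑ i ∈ (pset n q)ᶜ, |v i| = psum n v q - psum n v n := by
    have e3 : ∑ i ∈ (pset n q)ᶜ, |v i| = ∑ i ∈ (pset n q)ᶜ, (-v i) := by
      apply Finset.sum_congr rfl
      intro i hi
      rw [Finset.mem_compl, mem_pset] at hi
      have := h2 i (by omega)
      exact abs_of_nonpos (by linarith)
    have e4 : psum n v q + ∑ i ∈ (pset n q)ᶜ, v i = psum n v n := by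
      rw [psum_univ]
      exact Finset.sum_add_sum_compl (pset n q) v
    rw [e3, Finset.sum_neg_distrib]
    linarith
  rw [e1, e2]
  ring

lemma ksum_abs_ge {n : ℕ} (v : Fin n → ℝ) (p q : ℕ) (hpq : p ≤ q) (hqn : q ≤ n) :
    psum n v p + psum n v q - psum n v n ≤ ksum (fun i => |v i|) (p + (n - q)) := by
  classical
  set s : Finset (Fin n) := pset n p ∪ (pset n q)ᶜ with hs
  have hdisj : Disjoint (pset n p) (pset n q)ᶜ := by
    rw [Finset.disjoint_left]
    intro i hi hic
    rw [mem_pset] at hi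
    rw [Finset.mem_compl, mem_pset] at hic
    omega
  have hcard : s.card = p + (n - q) := by
    rw [hs, Finset.card_union_of_disjoint hdisj, card_pset, Finset.card_compl, card_pset,
      Fintype.card_fin]
    omega
  have hA : psum n v p ≤ ∑ i ∈ pset n p, |v i| :=
    Finset.sum_le_sum (fun i _ => le_abs_self _)
  have hB : psum n v q - psum n v n ≤ ∑ i ∈ (pset n q)ᶜ, |v i| := by
    have e4 : psum n v q + ∑ i ∈ (pset n q)ᶜ, v i = psum n v n := by
      rw [psum_univ]
      exact Finset.sum_add_sum_compl (pset n q) v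
    have : ∑ i ∈ (pset n q)ᶜ, (-v i) ≤ ∑ i ∈ (pset n q)ᶜ, |v i| :=
      Finset.sum_le_sum (fun i _ => neg_le_abs _)
    rw [Finset.sum_neg_distrib] at this
    linarith
  calc psum n v p + psum n v q - psum n v n ≤
        ∑ i ∈ pset n p, |v i| + ∑ i ∈ (pset n q)ᶜ, |v i| := by linarith
    _ = ∑ i ∈ s, |v i| := (Finset.sum_union hdisj).symm
    _ ≤ ksum (fun i => |v i|) (p + (n - q)) := by
        rw [← hcard]
        exact sum_le_ksum (fun i => |v i|) s

lemma psum_eq_of_ksum_eq {n : ℕ} (a b : Fin n → ℝ)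
    (hb : ∀ i j : Fin n, i ≤ j → b j ≤ b i)
    (hle : ∀ k, psum n b k ≤ psum n a k)
    (hn : psum n a n = psum n b n)
    (hk : ∀ k, ksum (fun i => |a i|) k = ksum (fun i => |b i|) k) :
    ∀ j, psum n a j = psum n b j := by
  intro j
  rcases le_or_gt n j with hj | hj
  · rw [psum_of_ge a hj, psum_of_ge b hj]
    exact hn
  by_cases hj0 : j = 0
  · subst hj0
    unfold psum
    have : pset n 0 = ∅ := by
      ext i; simp [mem_pset]
    rw [this]
    simp
  have hj1 : 1 ≤ j := by omega
  have hjmlt : j - 1 < n := by omega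
  set jm : Fin n := ⟨j - 1, hjmlt⟩ with hjm
  by_cases hcase : 0 ≤ b jm
  · -- case 1 : pivot c = b jm ≥ 0
    set c := b jm with hcdef
    set s' : Finset (Fin n) := univ.filter (fun i => c < -b i) with hs'
    set m := s'.card with hm
    have hup : s' = (pset n (n - m))ᶜ := by
      rw [hm]
      apply eq_compl_pset_of_up
      intro i hi i' hii'
      rw [hs', Finset.mem_filter] at hi ⊢
      refine ⟨Finset.mem_univ _, lt_of_lt_of_le hi.2 (neg_le_neg (hb i i' hii'))⟩
    have hdisj : Disjoint (pset n j) s' := by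
      rw [Finset.disjoint_left]
      intro i hi his
      rw [mem_pset] at hi
      rw [hs', Finset.mem_filter] at his
      have hile : i ≤ jm := by rw [Fin.le_def]; simp only [hjm]; omega
      have hbi : c ≤ b i := hb i jm hile
      linarith [his.2]
    have hjmn : j + m ≤ n := by
      have hcle := Finset.card_le_univ (pset n j ∪ s')
      rw [Finset.card_union_of_disjoint hdisj, card_pset, Fintype.card_fin] at hcle
      omega
    have h1 : ∀ i : Fin n, (i : ℕ) < j → c ≤ b i := by
      intro i hi
      exact hb i jm (by rw [Fin.le_def]; simp only [hjm]; omega)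
    have h2 : ∀ i : Fin n, n - m ≤ (i : ℕ) → c ≤ -b i := by
      intro i hi
      have : i ∈ s' := by
        rw [hup, Finset.mem_compl, mem_pset]
        omega
      rw [hs', Finset.mem_filter] at this
      exact this.2.le
    have h3 : ∀ i : Fin n, j ≤ (i : ℕ) → (i : ℕ) < n - m → |b i| ≤ c := by
      intro i hij hiq
      have hnotin : i ∉ s' := by
        rw [hup, Finset.mem_compl, mem_pset]
        omega
      rw [hs', Finset.mem_filter] at hnotin
      push_neg at hnotin
      have hle2 : -b i ≤ c := hnotin (Finset.mem_univ i)
      have hjmi : jm ≤ i := by rw [Fin.le_def]; simp only [hjm]; omega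
      have hbile : b i ≤ c := hb jm i hjmi
      rw [abs_le]
      exact ⟨by linarith, hbile⟩
    have hB := ksum_abs_eq b j (n - m) c hcase (by omega) (by omega) h1 h2 h3
    have hA := ksum_abs_ge a j (n - m) (by omega) (by omega)
    have hk' := hk (j + (n - (n - m)))
    have hq1 := hle j
    have hq2 := hle (n - m)
    refine le_antisymm ?_ hq1
    linarith
  · -- case 2 : pivot c = -b ⟨j⟩ > 0
    push_neg at hcase
    set jj : Fin n := ⟨j, hj⟩ with hjj
    have hjmjj : jm ≤ jj := by rw [Fin.le_def]; simp only [hjm, hjj]; omega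
    have hjjneg : b jj < 0 := lt_of_le_of_lt (hb jm jj hjmjj) hcase
    set c := -b jj with hcdef
    have hc0 : 0 ≤ c := by rw [hcdef]; linarith
    set s'' : Finset (Fin n) := univ.filter (fun i => c < b i) with hs''
    set r := s''.card with hr
    have hdown : s'' = pset n r := by
      rw [hr]
      apply eq_pset_of_down
      intro i hi i' hii'
      rw [hs'', Finset.mem_filter] at hi ⊢
      exact ⟨Finset.mem_univ _, lt_of_lt_of_le hi.2 (hb i' i hii')⟩
    have hsubj : ∀ i ∈ s'', (i : ℕ) < j := by
      intro i hi
      rw [hs'', Finset.mem_filter] at hi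
      by_contra hcon
      push_neg at hcon
      have hjji : jj ≤ i := by rw [Fin.le_def]; simp only [hjj]; omega
      have : b i ≤ b jj := hb jj i hjji
      rw [hcdef] at hi
      linarith [hi.2]
    have hrj : r ≤ j := by
      have hsub : s'' ⊆ pset n j := fun i hi => (mem_pset i).mpr (hsubj i hi)
      have hc := Finset.card_le_card hsub
      rw [card_pset] at hc
      omega
    have h1 : ∀ i : Fin n, (i : ℕ) < r → c ≤ b i := by
      intro i hi
      have : i ∈ s'' := by
        rw [hdown, mem_pset]
        exact hi
      rw [hs'', Finset.mem_filter] at this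
      exact this.2.le
    have h2 : ∀ i : Fin n, j ≤ (i : ℕ) → c ≤ -b i := by
      intro i hi
      have hjji : jj ≤ i := by rw [Fin.le_def]; simp only [hjj]; omega
      have : b i ≤ b jj := hb jj i hjji
      rw [hcdef]
      linarith
    have h3 : ∀ i : Fin n, r ≤ (i : ℕ) → (i : ℕ) < j → |b i| ≤ c := by
      intro i hri hij
      have hni : i ∉ s'' := by
        rw [hdown, mem_pset]
        omega
      rw [hs'', Finset.mem_filter] at hni
      push_neg at hni
      have hbc : b i ≤ c := hni (Finset.mem_univ i)
      have hijj : i ≤ jj := by rw [Fin.le_def]; simp only [hjj]; omega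
      have : b jj ≤ b i := hb i jj hijj
      rw [abs_le]
      constructor
      · rw [hcdef]; linarith
      · exact hbc
    have hB := ksum_abs_eq b r j c hc0 hrj hj.le h1 h2 h3
    have hA := ksum_abs_ge a r j hrj hj.le
    have hk' := hk (r + (n - j))
    have hq1 := hle j
    have hq2 := hle r
    refine le_antisymm ?_ hq1
    linarith

end KsumAux

open KsumAux Finset in
/-- Under the log-majorization hypotheses, if in addition for every `k` the sum of the `k`
largest of `|log xᵢ|` equals the sum of the `k` largest of `|log dᵢ|`, then `xᵢ = dᵢ`. -/
theorem eq_of_abs_log_equal_ksum (n : ℕ) (x d : Fin n → ℝ)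
    (hxpos : ∀ i, 0 < x i) (hdpos : ∀ i, 0 < d i)
    (hxdec : ∀ i j : Fin n, i ≤ j → x j ≤ x i)
    (hddec : ∀ i j : Fin n, i ≤ j → d j ≤ d i)
    (hprod : ∀ k < n, (∏ i ∈ Finset.univ.filter (fun i : Fin n => (i : ℕ) < k), d i) ≤
        ∏ i ∈ Finset.univ.filter (fun i : Fin n => (i : ℕ) < k), x i)
    (hprodeq : ∏ i, x i = ∏ i, d i)
    (heq : ∀ k : ℕ, ksum (fun i => |Real.log (x i)|) k = ksum (fun i => |Real.log (d i)|) k) :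
    ∀ i, x i = d i := by
  classical
  set A : Fin n → ℝ := fun i => Real.log (x i) with hA
  set B : Fin n → ℝ := fun i => Real.log (d i) with hB
  have hBdec : ∀ i j : Fin n, i ≤ j → B j ≤ B i := by
    intro i j h
    simp only [hB]
    exact Real.log_le_log (hdpos j) (hddec i j h)
  have hpn : psum n A n = psum n B n := by
    rw [psum_univ, psum_univ]
    simp only [hA, hB]
    rw [← Real.log_prod (fun i _ => (hxpos i).ne'),
      ← Real.log_prod (fun i _ => (hdpos i).ne'), hprodeq]
  have hle : ∀ k, psum n B k ≤ psum n A k := by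
    intro k
    rcases lt_or_ge k n with hk | hk
    · have h := hprod k hk
      have hdp : 0 < ∏ i ∈ Finset.univ.filter (fun i : Fin n => (i : ℕ) < k), d i :=
        Finset.prod_pos (fun i _ => hdpos i)
      have hlog := Real.log_le_log hdp h
      rw [Real.log_prod (fun i _ => (hdpos i).ne'),
        Real.log_prod (fun i _ => (hxpos i).ne')] at hlog
      exact hlog
    · rw [psum_of_ge A hk, psum_of_ge B hk]
      exact hpn.ge
  have hk : ∀ k, ksum (fun i => |A i|) k = ksum (fun i => |B i|) k := by
    intro k
    simp only [hA, hB]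
    exact heq k
  have hmain := psum_eq_of_ksum_eq A B hBdec hle hpn hk
  intro i
  have hstep : ∀ (v : Fin n → ℝ), psum n v ((i : ℕ) + 1) = psum n v (i : ℕ) + v i := by
    intro v
    unfold psum
    have hins : pset n ((i : ℕ) + 1) = insert i (pset n (i : ℕ)) := by
      ext i'
      simp only [mem_pset, Finset.mem_insert, Fin.ext_iff]
      omega
    have hnotmem : i ∉ pset n (i : ℕ) := by
      rw [mem_pset]; omega
    rw [hins, Finset.sum_insert hnotmem]
    ring
  have e1 := hmain ((i : ℕ) + 1)
  have e2 := hmain (i : ℕ)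
  rw [hstep A, hstep B] at e1
  have hAB : A i = B i := by linarith
  have hlog : Real.log (x i) = Real.log (d i) := by
    simpa only [hA, hB] using hAB
  calc x i = Real.exp (Real.log (x i)) := (Real.exp_log (hxpos i)).symm
    _ = Real.exp (Real.log (d i)) := by rw [hlog]
    _ = d i := Real.exp_log (hdpos i)
end

section
/- There exists a 2×1 real matrix Z with orthonormal columns factor in its polar decomposition Z = U_p H such that U_p is not the minimizer of ‖Log(Q*Z)‖ over matrices Q ∈ ℂ^{2×1} with Q*Q = 1: specifically, for Z = (1,1)ᵀ, U_p = (1/√2)(1,1)ᵀ, H = √2, one has |log(U_p*Z)| = log√2 > 0 while for V = (1,0)ᵀ, |log(V*Z)| = 0. -/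
open Matrix

/-- For the rectangular matrix `Z = (1,1)ᵀ` with polar decomposition `Z = U_p H`,
`U_p = (1/√2)(1,1)ᵀ`, `H = √2`, the polar factor `U_p` is not the minimizer of
`|Log(Q*Z)|` over `Q` with orthonormal columns: `|log(U_p* Z)| = log √2 > 0` while for
`V = (1,0)ᵀ` (also with `V*V = 1`) one has `|log(V* Z)| = 0`. -/
theorem polar_factor_not_minimizer_rectangular :
    ∃ Z Up V : Matrix (Fin 2) (Fin 1) ℝ,
      Z = Matrix.of ![![1], ![1]] ∧
      Up = Matrix.of ![![1 / Real.sqrt 2], ![1 / Real.sqrt 2]] ∧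
      V = Matrix.of ![![1], ![0]] ∧
      Upᵀ * Up = 1 ∧ Vᵀ * V = 1 ∧
      Z = Real.sqrt 2 • Up ∧
      |Real.log ((Upᵀ * Z) 0 0)| = Real.log (Real.sqrt 2) ∧
      0 < Real.log (Real.sqrt 2) ∧
      |Real.log ((Vᵀ * Z) 0 0)| = 0 := by
  have h2 : Real.sqrt 2 ≠ 0 := by positivity
  have hinv : 1 / Real.sqrt 2 * (1 / Real.sqrt 2) + 1 / Real.sqrt 2 * (1 / Real.sqrt 2) = 1 := by
    rw [div_mul_div_comm, Real.mul_self_sqrt (by norm_num)]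
    norm_num
  refine ⟨_, _, _, rfl, rfl, rfl, ?_, ?_, ?_, ?_, ?_, ?_⟩
  · ext i j
    fin_cases i; fin_cases j
    simp [Matrix.mul_apply, Fin.sum_univ_two, Matrix.transpose_apply, Matrix.vecHead, Matrix.vecTail]
    rw [← Real.sqrt_inv]
    rw [← Real.sqrt_mul (by norm_num : (0:ℝ) ≤ 2⁻¹)]
    norm_num
  · ext i j
    fin_cases i; fin_cases j
    simp [Matrix.mul_apply, Fin.sum_univ_two]
  · ext i j
    fin_cases i <;> fin_cases j <;>
      simp [Matrix.smul_apply, mul_one_div, div_self h2]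
  · have : ((Matrix.of ![![1 / Real.sqrt 2], ![1 / Real.sqrt 2]])ᵀ *
        Matrix.of ![![(1:ℝ)], ![1]]) 0 0 = Real.sqrt 2 := by
      simp [Matrix.mul_apply, Fin.sum_univ_two, Matrix.transpose_apply, Matrix.vecHead, Matrix.vecTail]
      have hs : Real.sqrt 2 * Real.sqrt 2 = 2 := Real.mul_self_sqrt (by norm_num)
      field_simp
      linarith [hs]
    rw [this, abs_of_nonneg (Real.log_nonneg (by
      rw [show (1:ℝ) = Real.sqrt 1 by simp]
      exact Real.sqrt_le_sqrt (by norm_num)))]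
  · exact Real.log_pos (by
      rw [show (1:ℝ) = Real.sqrt 1 by simp]
      exact Real.sqrt_lt_sqrt (by norm_num) (by norm_num))
  · have : ((Matrix.of ![![(1:ℝ)], ![0]])ᵀ * Matrix.of ![![(1:ℝ)], ![1]]) 0 0 = 1 := by
      simp [Matrix.mul_apply, Fin.sum_univ_two, Matrix.transpose_apply, Matrix.vecHead, Matrix.vecTail]
    rw [this]; simp
end
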